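/- The (A⊗A, A)-bimodule Δ spanned by {d_{n1 n2 l}} with left action (a_{m1 j1} ⊗ a_{m2 j2})·d_{n1 n2 l} = e^{−iλ[(n1+m1)j1 + (n2+m2)j2]} d_{n1+m1, n2+m2, l−j1−j2} and right action d_{n1 n2 l}·a_{mj} = e^{iλm(l−j)} d_{n1+m, n2+m, l−j} satisfies the coassociativity axiom: the (A⊗A⊗A, A)-bimodules (A ⊗ Δ) ⊗_{A⊗A} Δ and (Δ ⊗ A) ⊗_{A⊗A} Δ are isomorphic. -/

import Mathlib

open TensorProduct MulOpposite

section

variable {A D : Type} [Ring A] [Algebra ℂ A] [AddCommGroup D] [Module ℂ D]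

instance coassocAddCommGroup₁ : AddCommGroup (TensorProduct ℂ (TensorProduct ℂ A D) D) :=
  TensorProduct.addCommGroup

instance coassocAddCommGroup₂ : AddCommGroup (TensorProduct ℂ (TensorProduct ℂ D A) D) :=
  TensorProduct.addCommGroup

/-- The subspace of relations defining the balanced tensor product
`(A ⊗ Δ) ⊗_{A⊗A} Δ` inside `(A ⊗ Δ) ⊗ Δ` (tensor products over `ℂ`). -/
noncomputable def coassocRel₁ (rhoL : TensorProduct ℂ A A →ₐ[ℂ] Module.End ℂ D)
    (rhoR : Aᵐᵒᵖ →ₐ[ℂ] Module.End ℂ D) :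
    Submodule ℂ (TensorProduct ℂ (TensorProduct ℂ A D) D) :=
  Submodule.span ℂ {z | ∃ (x : TensorProduct ℂ A D) (δ : D) (b₁ b₂ : A),
    z = (TensorProduct.map (LinearMap.mulRight ℂ b₁) (rhoR (op b₂)) x) ⊗ₜ[ℂ] δ
        - x ⊗ₜ[ℂ] (rhoL (b₁ ⊗ₜ[ℂ] b₂) δ)}

/-- The subspace of relations defining the balanced tensor product
`(Δ ⊗ A) ⊗_{A⊗A} Δ` inside `(Δ ⊗ A) ⊗ Δ`. -/
noncomputable def coassocRel₂ (rhoL : TensorProduct ℂ A A →ₐ[ℂ] Module.End ℂ D)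
    (rhoR : Aᵐᵒᵖ →ₐ[ℂ] Module.End ℂ D) :
    Submodule ℂ (TensorProduct ℂ (TensorProduct ℂ D A) D) :=
  Submodule.span ℂ {z | ∃ (x : TensorProduct ℂ D A) (δ : D) (b₁ b₂ : A),
    z = (TensorProduct.map (rhoR (op b₁)) (LinearMap.mulRight ℂ b₂) x) ⊗ₜ[ℂ] δ
        - x ⊗ₜ[ℂ] (rhoL (b₁ ⊗ₜ[ℂ] b₂) δ)}

/-- The left action of `c₁ ⊗ c₂ ⊗ c₃ ∈ A ⊗ A ⊗ A` on `(A ⊗ Δ) ⊗ Δ`. -/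
noncomputable def coassocL₁ (rhoL : TensorProduct ℂ A A →ₐ[ℂ] Module.End ℂ D) (c₁ c₂ c₃ : A) :
    TensorProduct ℂ (TensorProduct ℂ A D) D →ₗ[ℂ] TensorProduct ℂ (TensorProduct ℂ A D) D :=
  TensorProduct.map
    (TensorProduct.map (LinearMap.mulLeft ℂ c₁) (rhoL (c₂ ⊗ₜ[ℂ] c₃))) LinearMap.id

/-- The left action of `c₁ ⊗ c₂ ⊗ c₃ ∈ A ⊗ A ⊗ A` on `(Δ ⊗ A) ⊗ Δ`. -/
noncomputable def coassocL₂ (rhoL : TensorProduct ℂ A A →ₐ[ℂ] Module.End ℂ D) (c₁ c₂ c₃ : A) :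
    TensorProduct ℂ (TensorProduct ℂ D A) D →ₗ[ℂ] TensorProduct ℂ (TensorProduct ℂ D A) D :=
  TensorProduct.map
    (TensorProduct.map (rhoL (c₁ ⊗ₜ[ℂ] c₂)) (LinearMap.mulLeft ℂ c₃)) LinearMap.id

/-- The right action of `c ∈ A` on `(A ⊗ Δ) ⊗ Δ` (through the last factor). -/
noncomputable def coassocR₁ (rhoR : Aᵐᵒᵖ →ₐ[ℂ] Module.End ℂ D) (c : A) :
    TensorProduct ℂ (TensorProduct ℂ A D) D →ₗ[ℂ] TensorProduct ℂ (TensorProduct ℂ A D) D :=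
  TensorProduct.map LinearMap.id (rhoR (op c))

/-- The right action of `c ∈ A` on `(Δ ⊗ A) ⊗ Δ` (through the last factor). -/
noncomputable def coassocR₂ (rhoR : Aᵐᵒᵖ →ₐ[ℂ] Module.End ℂ D) (c : A) :
    TensorProduct ℂ (TensorProduct ℂ D A) D →ₗ[ℂ] TensorProduct ℂ (TensorProduct ℂ D A) D :=
  TensorProduct.map LinearMap.id (rhoR (op c))

end

set_option maxHeartbeats 1000000

namespace CoassocAux

noncomputable def ee (lam : ℝ) (E : ℤ) : ℂ := Complex.exp (Complex.I * (lam * (E : ℝ)))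

lemma ee_mul (lam : ℝ) (E F : ℤ) : ee lam E * ee lam F = ee lam (E + F) := by
  rw [ee, ee, ee, ← Complex.exp_add]; congr 1; push_cast; ring

lemma ee_zero (lam : ℝ) : ee lam 0 = 1 := by simp [ee]

lemma ee_congr (lam : ℝ) {E F : ℤ} (h : E = F) : ee lam E = ee lam F := by rw [h]

abbrev W : Type := (ℤ × ℤ × ℤ × ℤ) →₀ ℂ

noncomputable def bw : Module.Basis (ℤ × ℤ × ℤ × ℤ) ℂ W := Finsupp.basisSingleOne

variable {A D : Type} [Ring A] [Algebra ℂ A] [AddCommGroup D] [Module ℂ D]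

noncomputable def B1 (b : Module.Basis (ℤ×ℤ) ℂ A) (bd : Module.Basis (ℤ×ℤ×ℤ) ℂ D) :
    Module.Basis (((ℤ×ℤ) × (ℤ×ℤ×ℤ)) × (ℤ×ℤ×ℤ)) ℂ (TensorProduct ℂ (TensorProduct ℂ A D) D) :=
  (b.tensorProduct bd).tensorProduct bd

noncomputable def B2 (b : Module.Basis (ℤ×ℤ) ℂ A) (bd : Module.Basis (ℤ×ℤ×ℤ) ℂ D) :
    Module.Basis (((ℤ×ℤ×ℤ) × (ℤ×ℤ)) × (ℤ×ℤ×ℤ)) ℂ (TensorProduct ℂ (TensorProduct ℂ D A) D) :=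
  (bd.tensorProduct b).tensorProduct bd

noncomputable def p1 (lam : ℝ) (b : Module.Basis (ℤ×ℤ) ℂ A) (bd : Module.Basis (ℤ×ℤ×ℤ) ℂ D) :
    TensorProduct ℂ (TensorProduct ℂ A D) D →ₗ[ℂ] W :=
  (B1 b bd).constr ℂ fun q => match q with
  | (((m,j),(n1,n2,l)),(p,q,r)) =>
      ee lam (-(m*j) - p*j + q*l) • bw (n2-n1, p+m, q+n1, r+l-j)

noncomputable def p2 (lam : ℝ) (b : Module.Basis (ℤ×ℤ) ℂ A) (bd : Module.Basis (ℤ×ℤ×ℤ) ℂ D) :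
    TensorProduct ℂ (TensorProduct ℂ D A) D →ₗ[ℂ] W :=
  (B2 b bd).constr ℂ fun q => match q with
  | (((n1,n2,l),(m,j)),(p,q,r)) =>
      ee lam (p*l - q*j - m*j) • bw (q+m-p-n2, n1+p, p+n2, r+l-j)

noncomputable def s1 (a : ℤ → ℤ → A) (dd : ℤ → ℤ → ℤ → D) :
    W →ₗ[ℂ] TensorProduct ℂ (TensorProduct ℂ A D) D :=
  bw.constr ℂ fun q => match q with
  | (k,u,v,c) => (a 0 0 ⊗ₜ[ℂ] dd 0 k 0) ⊗ₜ[ℂ] dd u v c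

noncomputable def s2 (a : ℤ → ℤ → A) (dd : ℤ → ℤ → ℤ → D) :
    W →ₗ[ℂ] TensorProduct ℂ (TensorProduct ℂ D A) D :=
  bw.constr ℂ fun q => match q with
  | (k,u,v,c) => (dd (u-v) 0 0 ⊗ₜ[ℂ] a 0 0) ⊗ₜ[ℂ] dd v (k+v) c

section withBases

variable (lam : ℝ) (a : ℤ → ℤ → A) (b : Module.Basis (ℤ×ℤ) ℂ A) (hb : ∀ n l : ℤ, b (n, l) = a n l)
  (dd : ℤ → ℤ → ℤ → D) (bd : Module.Basis (ℤ×ℤ×ℤ) ℂ D) (hbd : ∀ n₁ n₂ l : ℤ, bd (n₁, n₂, l) = dd n₁ n₂ l)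

include hb hbd in
lemma p1_apply (m j n1 n2 l p q r : ℤ) :
    p1 lam b bd ((a m j ⊗ₜ[ℂ] dd n1 n2 l) ⊗ₜ[ℂ] dd p q r) =
      ee lam (-(m*j) - p*j + q*l) • bw (n2-n1, p+m, q+n1, r+l-j) := by
  have : (a m j ⊗ₜ[ℂ] dd n1 n2 l) ⊗ₜ[ℂ] dd p q r = B1 b bd (((m,j),(n1,n2,l)),(p,q,r)) := by
    rw [B1, Module.Basis.tensorProduct_apply, Module.Basis.tensorProduct_apply, hb, hbd, hbd]
  rw [this, p1, Module.Basis.constr_basis]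

include hb hbd in
lemma p2_apply (n1 n2 l m j p q r : ℤ) :
    p2 lam b bd ((dd n1 n2 l ⊗ₜ[ℂ] a m j) ⊗ₜ[ℂ] dd p q r) =
      ee lam (p*l - q*j - m*j) • bw (q+m-p-n2, n1+p, p+n2, r+l-j) := by
  have : (dd n1 n2 l ⊗ₜ[ℂ] a m j) ⊗ₜ[ℂ] dd p q r = B2 b bd (((n1,n2,l),(m,j)),(p,q,r)) := by
    rw [B2, Module.Basis.tensorProduct_apply, Module.Basis.tensorProduct_apply, hb, hbd, hbd]
  rw [this, p2, Module.Basis.constr_basis]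

lemma s1_apply (k u v c : ℤ) :
    s1 a dd (bw (k,u,v,c)) = (a 0 0 ⊗ₜ[ℂ] dd 0 k 0) ⊗ₜ[ℂ] dd u v c := by
  rw [s1, Module.Basis.constr_basis]

lemma s2_apply (k u v c : ℤ) :
    s2 a dd (bw (k,u,v,c)) = (dd (u-v) 0 0 ⊗ₜ[ℂ] a 0 0) ⊗ₜ[ℂ] dd v (k+v) c := by
  rw [s2, Module.Basis.constr_basis]

end withBases


section withBases2

variable (lam : ℝ) (a : ℤ → ℤ → A) (b : Module.Basis (ℤ×ℤ) ℂ A) (hb : ∀ n l : ℤ, b (n, l) = a n l)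
  (dd : ℤ → ℤ → ℤ → D) (bd : Module.Basis (ℤ×ℤ×ℤ) ℂ D) (hbd : ∀ n₁ n₂ l : ℤ, bd (n₁, n₂, l) = dd n₁ n₂ l)
  (rhoL : TensorProduct ℂ A A →ₐ[ℂ] Module.End ℂ D)
  (rhoR : Aᵐᵒᵖ →ₐ[ℂ] Module.End ℂ D)

lemma hmul' (hmul : ∀ n₁ l₁ n₂ l₂ : ℤ,
      a n₁ l₁ * a n₂ l₂ =
        Complex.exp (Complex.I * (lam * n₁ * l₂)) • a (n₁ + n₂) (l₁ + l₂)) :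
    ∀ n₁ l₁ n₂ l₂ : ℤ, a n₁ l₁ * a n₂ l₂ = ee lam (n₁ * l₂) • a (n₁ + n₂) (l₁ + l₂) := by
  intro n₁ l₁ n₂ l₂
  rw [hmul n₁ l₁ n₂ l₂, ee]
  congr 2
  push_cast; ring

lemma hL' (hL : ∀ m₁ j₁ m₂ j₂ n₁ n₂ l : ℤ,
      rhoL (a m₁ j₁ ⊗ₜ[ℂ] a m₂ j₂) (dd n₁ n₂ l) =
        Complex.exp (-(Complex.I *
            (lam * (((n₁ + m₁) * j₁ + (n₂ + m₂) * j₂ : ℤ) : ℝ)))) •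
          dd (n₁ + m₁) (n₂ + m₂) (l - j₁ - j₂)) :
    ∀ m₁ j₁ m₂ j₂ n₁ n₂ l : ℤ,
      rhoL (a m₁ j₁ ⊗ₜ[ℂ] a m₂ j₂) (dd n₁ n₂ l) =
        ee lam (-((n₁ + m₁) * j₁ + (n₂ + m₂) * j₂)) •
          dd (n₁ + m₁) (n₂ + m₂) (l - j₁ - j₂) := by
  intro m₁ j₁ m₂ j₂ n₁ n₂ l
  rw [hL m₁ j₁ m₂ j₂ n₁ n₂ l, ee]
  congr 2
  push_cast; ring

lemma hR' (hR : ∀ m j n₁ n₂ l : ℤ,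
      rhoR (MulOpposite.op (a m j)) (dd n₁ n₂ l) =
        Complex.exp (Complex.I * (lam * (((m * (l - j)) : ℤ) : ℝ))) •
          dd (n₁ + m) (n₂ + m) (l - j)) :
    ∀ m j n₁ n₂ l : ℤ,
      rhoR (MulOpposite.op (a m j)) (dd n₁ n₂ l) =
        ee lam (m * (l - j)) • dd (n₁ + m) (n₂ + m) (l - j) := hR

include hb hbd in
lemma p1s1 : (p1 lam b bd (A := A) (D := D)).comp (s1 a dd) = LinearMap.id := by
  apply bw.ext
  rintro ⟨k, u, v, c⟩
  rw [LinearMap.comp_apply, s1_apply, p1_apply lam a b hb dd bd hbd]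
  simp [ee_zero]

include hb hbd in
lemma p2s2 : (p2 lam b bd (A := A) (D := D)).comp (s2 a dd) = LinearMap.id := by
  apply bw.ext
  rintro ⟨k, u, v, c⟩
  rw [LinearMap.comp_apply, s2_apply, p2_apply lam a b hb dd bd hbd]
  simp [ee_zero]

end withBases2

lemma ext_zero {ι M N : Type*} [AddCommGroup M] [Module ℂ M] [AddCommGroup N] [Module ℂ N]
    (bb : Module.Basis ι ℂ M) (f : M → N)
    (hadd : ∀ x y, f (x + y) = f x + f y) (hsmul : ∀ (r : ℂ) (x : M), f (r • x) = r • f x)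
    (h : ∀ i, f (bb i) = 0) : ∀ x, f x = 0 := by
  intro x
  let F : M →ₗ[ℂ] N := ⟨⟨f, fun x y => hadd x y⟩, fun r x => hsmul r x⟩
  have hF : F = 0 := bb.ext fun i => by simpa [F] using h i
  have := congrArg (fun (g : M →ₗ[ℂ] N) => g x) hF
  simpa [F] using this


section withAll

variable (lam : ℝ) (a : ℤ → ℤ → A) (b : Module.Basis (ℤ×ℤ) ℂ A) (hb : ∀ n l : ℤ, b (n, l) = a n l)
  (dd : ℤ → ℤ → ℤ → D) (bd : Module.Basis (ℤ×ℤ×ℤ) ℂ D) (hbd : ∀ n₁ n₂ l : ℤ, bd (n₁, n₂, l) = dd n₁ n₂ l)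
  (rhoL : TensorProduct ℂ A A →ₐ[ℂ] Module.End ℂ D)
  (rhoR : Aᵐᵒᵖ →ₐ[ℂ] Module.End ℂ D)
  (hm : ∀ n₁ l₁ n₂ l₂ : ℤ, a n₁ l₁ * a n₂ l₂ = ee lam (n₁ * l₂) • a (n₁ + n₂) (l₁ + l₂))
  (hLe : ∀ m₁ j₁ m₂ j₂ n₁ n₂ l : ℤ,
      rhoL (a m₁ j₁ ⊗ₜ[ℂ] a m₂ j₂) (dd n₁ n₂ l) =
        ee lam (-((n₁ + m₁) * j₁ + (n₂ + m₂) * j₂)) • dd (n₁ + m₁) (n₂ + m₂) (l - j₁ - j₂))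
  (hRe : ∀ m j n₁ n₂ l : ℤ,
      rhoR (MulOpposite.op (a m j)) (dd n₁ n₂ l) =
        ee lam (m * (l - j)) • dd (n₁ + m) (n₂ + m) (l - j))

include hb hbd hm hLe hRe in
lemma sp1_basis (m j n1 n2 l p q r : ℤ) :
    s1 a dd (p1 lam b bd ((a m j ⊗ₜ[ℂ] dd n1 n2 l) ⊗ₜ[ℂ] dd p q r))
      - (a m j ⊗ₜ[ℂ] dd n1 n2 l) ⊗ₜ[ℂ] dd p q r ∈ coassocRel₁ rhoL rhoR := by
  have hmem : ((TensorProduct.map (LinearMap.mulRight ℂ (a (-m) (-j)))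
        (rhoR (op (a (-n1) l))) (a m j ⊗ₜ[ℂ] dd n1 n2 l)) ⊗ₜ[ℂ] dd (p+m) (q+n1) (r+l-j)
        - (a m j ⊗ₜ[ℂ] dd n1 n2 l) ⊗ₜ[ℂ]
            (rhoL (a (-m) (-j) ⊗ₜ[ℂ] a (-n1) l) (dd (p+m) (q+n1) (r+l-j))))
        ∈ coassocRel₁ rhoL rhoR :=
    Submodule.subset_span ⟨_, _, _, _, rfl⟩
  have h2 := Submodule.smul_mem _ (ee lam (-(p*j) + q*l)) hmem
  convert h2 using 1
  rw [p1_apply lam a b hb dd bd hbd, map_smul, s1_apply]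
  rw [TensorProduct.map_tmul, LinearMap.mulRight_apply, hm, hRe, hLe]
  simp only [smul_tmul', tmul_smul, smul_sub, smul_smul, ee_mul, add_neg_cancel,
    add_neg_cancel_right, sub_neg_eq_add, sub_add_cancel, add_sub_cancel_right, sub_self,
    mul_zero, zero_mul, ee_zero, one_smul]
  rw [show n2 + -n1 = n2 - n1 by ring,
      show (-(p*j)+q*l+ -(p*(-j)+q*l) : ℤ) = 0 by ring, ee_zero, one_smul]
  rw [ee_congr lam (show (-(m*j) - p*j + q*l : ℤ) = -(p*j)+q*l+m*(-j) by ring)]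

include hb hbd hm hLe hRe in
lemma sp2_basis (n1 n2 l m j p q r : ℤ) :
    s2 a dd (p2 lam b bd ((dd n1 n2 l ⊗ₜ[ℂ] a m j) ⊗ₜ[ℂ] dd p q r))
      - (dd n1 n2 l ⊗ₜ[ℂ] a m j) ⊗ₜ[ℂ] dd p q r ∈ coassocRel₂ rhoL rhoR := by
  have hmem : ((TensorProduct.map (rhoR (op (a (-n2) l)))
        (LinearMap.mulRight ℂ (a (-m) (-j))) (dd n1 n2 l ⊗ₜ[ℂ] a m j)) ⊗ₜ[ℂ]
          dd (p+n2) (q+m) (r+l-j)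
        - (dd n1 n2 l ⊗ₜ[ℂ] a m j) ⊗ₜ[ℂ]
            (rhoL (a (-n2) l ⊗ₜ[ℂ] a (-m) (-j)) (dd (p+n2) (q+m) (r+l-j))))
        ∈ coassocRel₂ rhoL rhoR :=
    Submodule.subset_span ⟨_, _, _, _, rfl⟩
  have h2 := Submodule.smul_mem _ (ee lam (p*l - q*j)) hmem
  convert h2 using 1
  rw [p2_apply lam a b hb dd bd hbd, map_smul, s2_apply]
  rw [TensorProduct.map_tmul, LinearMap.mulRight_apply, hm, hRe, hLe]
  simp only [smul_tmul', tmul_smul, smul_sub, smul_smul, ee_mul, add_neg_cancel,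
    add_neg_cancel_right, sub_neg_eq_add, sub_add_cancel, add_sub_cancel_right, sub_self,
    mul_zero, zero_mul, ee_zero, one_smul]
  rw [show n1 + p - (p + n2) = n1 + -n2 by ring,
      show q + m - p - n2 + (p + n2) = q + m by ring,
      show (r + l - j - l + j : ℤ) = r by ring,
      show (p*l - q*j + -(p * l + q * -j) : ℤ) = 0 by ring, ee_zero, one_smul,
      ee_congr lam (show (p*l - q*j - m*j : ℤ) = p*l - q*j + m*(-j) by ring)]

lemma mulRight_add' (x y : A) :
    LinearMap.mulRight ℂ (x + y) = LinearMap.mulRight ℂ x + LinearMap.mulRight ℂ y := by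
  ext z; simp [mul_add]

lemma mulRight_smul' (r : ℂ) (x : A) :
    LinearMap.mulRight ℂ (r • x) = r • LinearMap.mulRight ℂ x := by
  ext z; simp [Algebra.mul_smul_comm]

include hb hbd hLe hRe in
lemma comm_all (t : TensorProduct ℂ A A) (c : A) (x : D) :
    rhoL t (rhoR (op c) x) - rhoR (op c) (rhoL t x) = 0 := by
  revert c x
  have stepA : ∀ (m1 j1 m2 j2 : ℤ) (c : A) (x : D),
      rhoL (a m1 j1 ⊗ₜ[ℂ] a m2 j2) (rhoR (op c) x)
        - rhoR (op c) (rhoL (a m1 j1 ⊗ₜ[ℂ] a m2 j2) x) = 0 := by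
    intro m1 j1 m2 j2
    have stepB : ∀ (m j : ℤ) (x : D),
        rhoL (a m1 j1 ⊗ₜ[ℂ] a m2 j2) (rhoR (op (a m j)) x)
          - rhoR (op (a m j)) (rhoL (a m1 j1 ⊗ₜ[ℂ] a m2 j2) x) = 0 := by
      intro m j
      apply ext_zero bd
      · intro x y; simp only [map_add]; abel
      · intro r x; simp only [map_smul, smul_sub]
      · rintro ⟨n1, n2, l⟩
        rw [hbd, hRe, hLe, map_smul, map_smul, hLe, hRe, smul_smul, smul_smul, ee_mul, ee_mul]
        rw [show n1 + m + m1 = n1 + m1 + m by ring, show n2 + m + m2 = n2 + m2 + m by ring,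
            show (l - j - j1 - j2 : ℤ) = l - j1 - j2 - j by ring,
            ee_congr lam (show (m * (l - j) + -((n1 + m1 + m) * j1 + (n2 + m2 + m) * j2) : ℤ)
              = -((n1 + m1) * j1 + (n2 + m2) * j2) + m * (l - j1 - j2 - j) by ring)]
        exact sub_self _
    intro c x
    refine ext_zero b (fun c => rhoL (a m1 j1 ⊗ₜ[ℂ] a m2 j2) (rhoR (op c) x)
        - rhoR (op c) (rhoL (a m1 j1 ⊗ₜ[ℂ] a m2 j2) x)) ?_ ?_ ?_ c
    · intro u v
      simp only [op_add, map_add, LinearMap.add_apply]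
      abel
    · intro r u
      simp only [op_smul, map_smul, LinearMap.smul_apply, smul_sub]
    · rintro ⟨m, j⟩
      rw [hb]
      exact stepB m j x
  intro c x
  refine ext_zero (b.tensorProduct b)
    (fun t => rhoL t (rhoR (op c) x) - rhoR (op c) (rhoL t x)) ?_ ?_ ?_ t
  · intro u v; simp only [map_add, LinearMap.add_apply]; abel
  · intro r u; simp only [map_smul, LinearMap.smul_apply, smul_sub]
  · rintro ⟨⟨m1, j1⟩, ⟨m2, j2⟩⟩
    rw [Module.Basis.tensorProduct_apply, hb, hb]
    exact stepA m1 j1 m2 j2 c x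

include hb hbd hm hLe hRe in
lemma p1_kills_base (m j n1 n2 l p q r m1 j1 m2 j2 : ℤ) :
    p1 lam b bd ((TensorProduct.map (LinearMap.mulRight ℂ (a m1 j1)) (rhoR (op (a m2 j2)))
        (a m j ⊗ₜ[ℂ] dd n1 n2 l)) ⊗ₜ[ℂ] dd p q r)
      - p1 lam b bd ((a m j ⊗ₜ[ℂ] dd n1 n2 l) ⊗ₜ[ℂ]
          (rhoL (a m1 j1 ⊗ₜ[ℂ] a m2 j2) (dd p q r))) = 0 := by
  rw [TensorProduct.map_tmul, LinearMap.mulRight_apply, hm, hRe, hLe]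
  simp only [← TensorProduct.smul_tmul', TensorProduct.tmul_smul, map_smul, smul_smul, ee_mul]
  rw [p1_apply lam a b hb dd bd hbd, p1_apply lam a b hb dd bd hbd]
  rw [smul_smul, smul_smul, ee_mul, ee_mul]
  rw [sub_eq_zero]
  congr 1
  · exact ee_congr lam (by ring)
  · congr 1
    simp only [Prod.mk.injEq]
    omega

include hb hbd hm hLe hRe in
lemma p1_kills (x : TensorProduct ℂ A D) (δ : D) (b₁ b₂ : A) :
    p1 lam b bd ((TensorProduct.map (LinearMap.mulRight ℂ b₁) (rhoR (op b₂)) x) ⊗ₜ[ℂ] δ)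
      - p1 lam b bd (x ⊗ₜ[ℂ] (rhoL (b₁ ⊗ₜ[ℂ] b₂) δ)) = 0 := by
  -- extend b₂
  have step2 : ∀ (m j n1 n2 l p q r m1 j1 : ℤ) (b₂ : A),
      p1 lam b bd ((TensorProduct.map (LinearMap.mulRight ℂ (a m1 j1)) (rhoR (op b₂))
        (a m j ⊗ₜ[ℂ] dd n1 n2 l)) ⊗ₜ[ℂ] dd p q r)
      - p1 lam b bd ((a m j ⊗ₜ[ℂ] dd n1 n2 l) ⊗ₜ[ℂ]
          (rhoL (a m1 j1 ⊗ₜ[ℂ] b₂) (dd p q r))) = 0 := by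
    intro m j n1 n2 l p q r m1 j1 b₂
    refine ext_zero b (fun c => p1 lam b bd ((TensorProduct.map (LinearMap.mulRight ℂ (a m1 j1))
        (rhoR (op c)) (a m j ⊗ₜ[ℂ] dd n1 n2 l)) ⊗ₜ[ℂ] dd p q r)
      - p1 lam b bd ((a m j ⊗ₜ[ℂ] dd n1 n2 l) ⊗ₜ[ℂ]
          (rhoL (a m1 j1 ⊗ₜ[ℂ] c) (dd p q r)))) ?_ ?_ ?_ b₂
    · intro u v
      simp only [op_add, map_add, map_add_right, tmul_add, LinearMap.add_apply, add_tmul]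
      abel
    · intro r' u
      simp only [op_smul, map_smul, tmul_smul, map_smul_right, LinearMap.smul_apply,
        ← TensorProduct.smul_tmul', smul_sub]
    · rintro ⟨m2, j2⟩
      rw [hb]
      exact p1_kills_base lam a b hb dd bd hbd rhoL rhoR hm hLe hRe m j n1 n2 l p q r m1 j1 m2 j2
  -- extend b₁
  have step3 : ∀ (m j n1 n2 l p q r : ℤ) (b₁ b₂ : A),
      p1 lam b bd ((TensorProduct.map (LinearMap.mulRight ℂ b₁) (rhoR (op b₂))
        (a m j ⊗ₜ[ℂ] dd n1 n2 l)) ⊗ₜ[ℂ] dd p q r)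
      - p1 lam b bd ((a m j ⊗ₜ[ℂ] dd n1 n2 l) ⊗ₜ[ℂ]
          (rhoL (b₁ ⊗ₜ[ℂ] b₂) (dd p q r))) = 0 := by
    intro m j n1 n2 l p q r b₁ b₂
    refine ext_zero b (fun c => p1 lam b bd ((TensorProduct.map (LinearMap.mulRight ℂ c)
        (rhoR (op b₂)) (a m j ⊗ₜ[ℂ] dd n1 n2 l)) ⊗ₜ[ℂ] dd p q r)
      - p1 lam b bd ((a m j ⊗ₜ[ℂ] dd n1 n2 l) ⊗ₜ[ℂ]
          (rhoL (c ⊗ₜ[ℂ] b₂) (dd p q r)))) ?_ ?_ ?_ b₁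
    · intro u v
      simp only [mulRight_add', map_add_left, add_tmul, tmul_add, map_add, LinearMap.add_apply]
      abel
    · intro r' u
      simp only [mulRight_smul', map_smul_left, ← TensorProduct.smul_tmul', map_smul,
        tmul_smul, LinearMap.smul_apply, smul_sub]
    · rintro ⟨m1, j1⟩
      rw [hb]
      exact step2 m j n1 n2 l p q r m1 j1 b₂
  -- extend δ
  have step4 : ∀ (m j n1 n2 l : ℤ) (δ : D) (b₁ b₂ : A),
      p1 lam b bd ((TensorProduct.map (LinearMap.mulRight ℂ b₁) (rhoR (op b₂))
        (a m j ⊗ₜ[ℂ] dd n1 n2 l)) ⊗ₜ[ℂ] δ)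
      - p1 lam b bd ((a m j ⊗ₜ[ℂ] dd n1 n2 l) ⊗ₜ[ℂ] (rhoL (b₁ ⊗ₜ[ℂ] b₂) δ)) = 0 := by
    intro m j n1 n2 l δ b₁ b₂
    refine ext_zero bd (fun δ => p1 lam b bd ((TensorProduct.map (LinearMap.mulRight ℂ b₁)
        (rhoR (op b₂)) (a m j ⊗ₜ[ℂ] dd n1 n2 l)) ⊗ₜ[ℂ] δ)
      - p1 lam b bd ((a m j ⊗ₜ[ℂ] dd n1 n2 l) ⊗ₜ[ℂ] (rhoL (b₁ ⊗ₜ[ℂ] b₂) δ))) ?_ ?_ ?_ δ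
    · intro u v
      simp only [map_add, tmul_add]
      abel
    · intro r' u
      simp only [map_smul, tmul_smul, smul_sub]
    · rintro ⟨n1', n2', l'⟩
      rw [hbd]
      exact step3 m j n1 n2 l n1' n2' l' b₁ b₂
  -- extend x
  refine ext_zero (b.tensorProduct bd) (fun x => p1 lam b bd ((TensorProduct.map
      (LinearMap.mulRight ℂ b₁) (rhoR (op b₂)) x) ⊗ₜ[ℂ] δ)
    - p1 lam b bd (x ⊗ₜ[ℂ] (rhoL (b₁ ⊗ₜ[ℂ] b₂) δ))) ?_ ?_ ?_ x
  · intro u v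
    simp only [map_add, add_tmul]
    abel
  · intro r' u
    simp only [map_smul, ← TensorProduct.smul_tmul', smul_sub]
  · rintro ⟨⟨m, j⟩, ⟨n1, n2, l⟩⟩
    rw [Module.Basis.tensorProduct_apply, hb, hbd]
    exact step4 m j n1 n2 l δ b₁ b₂

include hb hbd hm hLe hRe in
lemma p2_kills_base (n1 n2 l m j p q r m1 j1 m2 j2 : ℤ) :
    p2 lam b bd ((TensorProduct.map (rhoR (op (a m1 j1))) (LinearMap.mulRight ℂ (a m2 j2))
        (dd n1 n2 l ⊗ₜ[ℂ] a m j)) ⊗ₜ[ℂ] dd p q r)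
      - p2 lam b bd ((dd n1 n2 l ⊗ₜ[ℂ] a m j) ⊗ₜ[ℂ]
          (rhoL (a m1 j1 ⊗ₜ[ℂ] a m2 j2) (dd p q r))) = 0 := by
  rw [TensorProduct.map_tmul, LinearMap.mulRight_apply, hm, hRe, hLe]
  simp only [← TensorProduct.smul_tmul', TensorProduct.tmul_smul, map_smul, smul_smul, ee_mul]
  rw [p2_apply lam a b hb dd bd hbd, p2_apply lam a b hb dd bd hbd]
  rw [smul_smul, smul_smul, ee_mul, ee_mul]
  rw [sub_eq_zero]
  congr 1
  · exact ee_congr lam (by ring)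
  · congr 1
    simp only [Prod.mk.injEq]
    omega

include hb hbd hm hLe hRe in
lemma p2_kills (x : TensorProduct ℂ D A) (δ : D) (b₁ b₂ : A) :
    p2 lam b bd ((TensorProduct.map (rhoR (op b₁)) (LinearMap.mulRight ℂ b₂) x) ⊗ₜ[ℂ] δ)
      - p2 lam b bd (x ⊗ₜ[ℂ] (rhoL (b₁ ⊗ₜ[ℂ] b₂) δ)) = 0 := by
  have step2 : ∀ (n1 n2 l m j p q r m1 j1 : ℤ) (b₂ : A),
      p2 lam b bd ((TensorProduct.map (rhoR (op (a m1 j1))) (LinearMap.mulRight ℂ b₂)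
        (dd n1 n2 l ⊗ₜ[ℂ] a m j)) ⊗ₜ[ℂ] dd p q r)
      - p2 lam b bd ((dd n1 n2 l ⊗ₜ[ℂ] a m j) ⊗ₜ[ℂ]
          (rhoL (a m1 j1 ⊗ₜ[ℂ] b₂) (dd p q r))) = 0 := by
    intro n1 n2 l m j p q r m1 j1 b₂
    refine ext_zero b (fun c => p2 lam b bd ((TensorProduct.map (rhoR (op (a m1 j1)))
        (LinearMap.mulRight ℂ c) (dd n1 n2 l ⊗ₜ[ℂ] a m j)) ⊗ₜ[ℂ] dd p q r)
      - p2 lam b bd ((dd n1 n2 l ⊗ₜ[ℂ] a m j) ⊗ₜ[ℂ]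
          (rhoL (a m1 j1 ⊗ₜ[ℂ] c) (dd p q r)))) ?_ ?_ ?_ b₂
    · intro u v
      simp only [mulRight_add', map_add_right, add_tmul, tmul_add, map_add, LinearMap.add_apply]
      abel
    · intro r' u
      simp only [mulRight_smul', map_smul_right, ← TensorProduct.smul_tmul', map_smul,
        tmul_smul, LinearMap.smul_apply, smul_sub]
    · rintro ⟨m2, j2⟩
      rw [hb]
      exact p2_kills_base lam a b hb dd bd hbd rhoL rhoR hm hLe hRe n1 n2 l m j p q r m1 j1 m2 j2
  have step3 : ∀ (n1 n2 l m j p q r : ℤ) (b₁ b₂ : A),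
      p2 lam b bd ((TensorProduct.map (rhoR (op b₁)) (LinearMap.mulRight ℂ b₂)
        (dd n1 n2 l ⊗ₜ[ℂ] a m j)) ⊗ₜ[ℂ] dd p q r)
      - p2 lam b bd ((dd n1 n2 l ⊗ₜ[ℂ] a m j) ⊗ₜ[ℂ]
          (rhoL (b₁ ⊗ₜ[ℂ] b₂) (dd p q r))) = 0 := by
    intro n1 n2 l m j p q r b₁ b₂
    refine ext_zero b (fun c => p2 lam b bd ((TensorProduct.map (rhoR (op c))
        (LinearMap.mulRight ℂ b₂) (dd n1 n2 l ⊗ₜ[ℂ] a m j)) ⊗ₜ[ℂ] dd p q r)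
      - p2 lam b bd ((dd n1 n2 l ⊗ₜ[ℂ] a m j) ⊗ₜ[ℂ]
          (rhoL (c ⊗ₜ[ℂ] b₂) (dd p q r)))) ?_ ?_ ?_ b₁
    · intro u v
      simp only [op_add, map_add, map_add_left, add_tmul, tmul_add, LinearMap.add_apply]
      abel
    · intro r' u
      simp only [op_smul, map_smul, map_smul_left, ← TensorProduct.smul_tmul',
        tmul_smul, LinearMap.smul_apply, smul_sub]
    · rintro ⟨m1, j1⟩
      rw [hb]
      exact step2 n1 n2 l m j p q r m1 j1 b₂
  have step4 : ∀ (n1 n2 l m j : ℤ) (δ : D) (b₁ b₂ : A),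
      p2 lam b bd ((TensorProduct.map (rhoR (op b₁)) (LinearMap.mulRight ℂ b₂)
        (dd n1 n2 l ⊗ₜ[ℂ] a m j)) ⊗ₜ[ℂ] δ)
      - p2 lam b bd ((dd n1 n2 l ⊗ₜ[ℂ] a m j) ⊗ₜ[ℂ] (rhoL (b₁ ⊗ₜ[ℂ] b₂) δ)) = 0 := by
    intro n1 n2 l m j δ b₁ b₂
    refine ext_zero bd (fun δ => p2 lam b bd ((TensorProduct.map (rhoR (op b₁))
        (LinearMap.mulRight ℂ b₂) (dd n1 n2 l ⊗ₜ[ℂ] a m j)) ⊗ₜ[ℂ] δ)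
      - p2 lam b bd ((dd n1 n2 l ⊗ₜ[ℂ] a m j) ⊗ₜ[ℂ] (rhoL (b₁ ⊗ₜ[ℂ] b₂) δ))) ?_ ?_ ?_ δ
    · intro u v
      simp only [map_add, tmul_add]
      abel
    · intro r' u
      simp only [map_smul, tmul_smul, smul_sub]
    · rintro ⟨n1', n2', l'⟩
      rw [hbd]
      exact step3 n1 n2 l m j n1' n2' l' b₁ b₂
  refine ext_zero (bd.tensorProduct b) (fun x => p2 lam b bd ((TensorProduct.map
      (rhoR (op b₁)) (LinearMap.mulRight ℂ b₂) x) ⊗ₜ[ℂ] δ)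
    - p2 lam b bd (x ⊗ₜ[ℂ] (rhoL (b₁ ⊗ₜ[ℂ] b₂) δ))) ?_ ?_ ?_ x
  · intro u v
    simp only [map_add, add_tmul]
    abel
  · intro r' u
    simp only [map_smul, ← TensorProduct.smul_tmul', smul_sub]
  · rintro ⟨⟨n1, n2, l⟩, ⟨m, j⟩⟩
    rw [Module.Basis.tensorProduct_apply, hbd, hb]
    exact step4 n1 n2 l m j δ b₁ b₂

include hb hbd hm hLe hRe in
lemma intL_base (m1 j1 m2 j2 m3 j3 m j n1 n2 l p q r : ℤ) :
    p1 lam b bd (coassocL₁ rhoL (a m1 j1) (a m2 j2) (a m3 j3)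
        ((a m j ⊗ₜ[ℂ] dd n1 n2 l) ⊗ₜ[ℂ] dd p q r))
    = p2 lam b bd (coassocL₂ rhoL (a m1 j1) (a m2 j2) (a m3 j3)
        (s2 a dd (p1 lam b bd ((a m j ⊗ₜ[ℂ] dd n1 n2 l) ⊗ₜ[ℂ] dd p q r)))) := by
  rw [p1_apply lam a b hb dd bd hbd, map_smul, map_smul, s2_apply, map_smul]
  simp only [coassocL₁, coassocL₂, TensorProduct.map_tmul, LinearMap.mulLeft_apply,
    LinearMap.id_coe, id_eq]
  rw [hm, hm, hLe, hLe]
  simp only [← TensorProduct.smul_tmul', TensorProduct.tmul_smul, map_smul, smul_smul, ee_mul]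
  rw [p1_apply lam a b hb dd bd hbd, p2_apply lam a b hb dd bd hbd]
  rw [smul_smul, smul_smul, ee_mul, ee_mul]
  congr 1
  · exact ee_congr lam (by ring)
  · congr 1
    simp only [Prod.mk.injEq]
    omega

include hb hbd hm hLe hRe in
lemma intR_base (M J m j n1 n2 l p q r : ℤ) :
    p1 lam b bd (coassocR₁ rhoR (a M J)
        ((a m j ⊗ₜ[ℂ] dd n1 n2 l) ⊗ₜ[ℂ] dd p q r))
    = p2 lam b bd (coassocR₂ rhoR (a M J)
        (s2 a dd (p1 lam b bd ((a m j ⊗ₜ[ℂ] dd n1 n2 l) ⊗ₜ[ℂ] dd p q r)))) := by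
  rw [p1_apply lam a b hb dd bd hbd, map_smul, map_smul, s2_apply, map_smul]
  simp only [coassocR₁, coassocR₂, TensorProduct.map_tmul, LinearMap.id_coe, id_eq]
  rw [hRe, hRe]
  simp only [TensorProduct.tmul_smul, map_smul, smul_smul, ee_mul]
  rw [p1_apply lam a b hb dd bd hbd, p2_apply lam a b hb dd bd hbd]
  rw [smul_smul, smul_smul, ee_mul, ee_mul]
  congr 1
  · exact ee_congr lam (by ring)
  · congr 1
    simp only [Prod.mk.injEq]
    omega

lemma mulLeft_add' (x y : A) :
    LinearMap.mulLeft ℂ (x + y) = LinearMap.mulLeft ℂ x + LinearMap.mulLeft ℂ y := by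
  ext z; simp [add_mul]

lemma mulLeft_smul' (r : ℂ) (x : A) :
    LinearMap.mulLeft ℂ (r • x) = r • LinearMap.mulLeft ℂ x := by
  ext z; simp [Algebra.smul_mul_assoc]

include hb hbd hm hLe hRe in
lemma intL_all (c1 c2 c3 : A) (z : TensorProduct ℂ (TensorProduct ℂ A D) D) :
    p1 lam b bd (coassocL₁ rhoL c1 c2 c3 z)
    = p2 lam b bd (coassocL₂ rhoL c1 c2 c3 (s2 a dd (p1 lam b bd z))) := by
  -- first extend over z for basis c's
  have stepz : ∀ (m1 j1 m2 j2 m3 j3 : ℤ) (z : TensorProduct ℂ (TensorProduct ℂ A D) D),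
      p1 lam b bd (coassocL₁ rhoL (a m1 j1) (a m2 j2) (a m3 j3) z)
      = p2 lam b bd (coassocL₂ rhoL (a m1 j1) (a m2 j2) (a m3 j3)
          (s2 a dd (p1 lam b bd z))) := by
    intro m1 j1 m2 j2 m3 j3 z
    have hmap : (p1 lam b bd (A := A) (D := D)).comp (coassocL₁ rhoL (a m1 j1) (a m2 j2) (a m3 j3))
        = ((p2 lam b bd).comp ((coassocL₂ rhoL (a m1 j1) (a m2 j2) (a m3 j3)).comp
            ((s2 a dd).comp (p1 lam b bd)))) := by
      apply (B1 b bd).ext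
      rintro ⟨⟨⟨m, j⟩, ⟨n1, n2, l⟩⟩, ⟨p, q, r⟩⟩
      simp only [LinearMap.comp_apply, B1, Module.Basis.tensorProduct_apply, hb, hbd]
      exact intL_base lam a b hb dd bd hbd rhoL rhoR hm hLe hRe m1 j1 m2 j2 m3 j3 m j n1 n2 l p q r
    exact LinearMap.congr_fun hmap z
  -- extend c3
  have step3 : ∀ (m1 j1 m2 j2 : ℤ) (c3 : A) (z : TensorProduct ℂ (TensorProduct ℂ A D) D),
      p1 lam b bd (coassocL₁ rhoL (a m1 j1) (a m2 j2) c3 z)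
      = p2 lam b bd (coassocL₂ rhoL (a m1 j1) (a m2 j2) c3 (s2 a dd (p1 lam b bd z))) := by
    intro m1 j1 m2 j2 c3 z
    rw [← sub_eq_zero]
    refine ext_zero b (fun c => p1 lam b bd (coassocL₁ rhoL (a m1 j1) (a m2 j2) c z)
      - p2 lam b bd (coassocL₂ rhoL (a m1 j1) (a m2 j2) c
          (s2 a dd (p1 lam b bd z)))) ?_ ?_ ?_ c3
    · intro u v
      simp only [coassocL₁, coassocL₂, tmul_add, map_add, mulLeft_add', map_add_left,
        map_add_right, LinearMap.add_apply]
      abel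
    · intro r' u
      simp only [coassocL₁, coassocL₂, tmul_smul, map_smul, mulLeft_smul', map_smul_left,
        map_smul_right, LinearMap.smul_apply, smul_sub]
    · rintro ⟨m3, j3⟩
      rw [hb, sub_eq_zero]
      exact stepz m1 j1 m2 j2 m3 j3 z
  -- extend c2
  have step2 : ∀ (m1 j1 : ℤ) (c2 c3 : A) (z : TensorProduct ℂ (TensorProduct ℂ A D) D),
      p1 lam b bd (coassocL₁ rhoL (a m1 j1) c2 c3 z)
      = p2 lam b bd (coassocL₂ rhoL (a m1 j1) c2 c3 (s2 a dd (p1 lam b bd z))) := by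
    intro m1 j1 c2 c3 z
    rw [← sub_eq_zero]
    refine ext_zero b (fun c => p1 lam b bd (coassocL₁ rhoL (a m1 j1) c c3 z)
      - p2 lam b bd (coassocL₂ rhoL (a m1 j1) c c3
          (s2 a dd (p1 lam b bd z)))) ?_ ?_ ?_ c2
    · intro u v
      simp only [coassocL₁, coassocL₂, add_tmul, tmul_add, map_add, map_add_left,
        map_add_right, LinearMap.add_apply]
      abel
    · intro r' u
      simp only [coassocL₁, coassocL₂, ← TensorProduct.smul_tmul', tmul_smul, map_smul,
        map_smul_left, map_smul_right, LinearMap.smul_apply, smul_sub]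
    · rintro ⟨m2, j2⟩
      rw [hb, sub_eq_zero]
      exact step3 m1 j1 m2 j2 c3 z
  rw [← sub_eq_zero]
  refine ext_zero b (fun c => p1 lam b bd (coassocL₁ rhoL c c2 c3 z)
    - p2 lam b bd (coassocL₂ rhoL c c2 c3 (s2 a dd (p1 lam b bd z)))) ?_ ?_ ?_ c1
  · intro u v
    simp only [coassocL₁, coassocL₂, add_tmul, map_add, mulLeft_add', map_add_left,
      LinearMap.add_apply]
    abel
  · intro r' u
    simp only [coassocL₁, coassocL₂, ← TensorProduct.smul_tmul', map_smul, mulLeft_smul',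
      map_smul_left, LinearMap.smul_apply, smul_sub]
  · rintro ⟨m1, j1⟩
    rw [hb, sub_eq_zero]
    exact step2 m1 j1 c2 c3 z

include hb hbd hm hLe hRe in
lemma intR_all (c : A) (z : TensorProduct ℂ (TensorProduct ℂ A D) D) :
    p1 lam b bd (coassocR₁ rhoR c z)
    = p2 lam b bd (coassocR₂ rhoR c (s2 a dd (p1 lam b bd z))) := by
  have stepz : ∀ (M J : ℤ) (z : TensorProduct ℂ (TensorProduct ℂ A D) D),
      p1 lam b bd (coassocR₁ rhoR (a M J) z)
      = p2 lam b bd (coassocR₂ rhoR (a M J) (s2 a dd (p1 lam b bd z))) := by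
    intro M J z
    have hmap : (p1 lam b bd (A := A) (D := D)).comp (coassocR₁ rhoR (a M J))
        = ((p2 lam b bd).comp ((coassocR₂ rhoR (a M J)).comp
            ((s2 a dd).comp (p1 lam b bd)))) := by
      apply (B1 b bd).ext
      rintro ⟨⟨⟨m, j⟩, ⟨n1, n2, l⟩⟩, ⟨p, q, r⟩⟩
      simp only [LinearMap.comp_apply, B1, Module.Basis.tensorProduct_apply, hb, hbd]
      exact intR_base lam a b hb dd bd hbd rhoL rhoR hm hLe hRe M J m j n1 n2 l p q r
    exact LinearMap.congr_fun hmap z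
  rw [← sub_eq_zero]
  refine ext_zero b (fun c => p1 lam b bd (coassocR₁ rhoR c z)
    - p2 lam b bd (coassocR₂ rhoR c (s2 a dd (p1 lam b bd z)))) ?_ ?_ ?_ c
  · intro u v
    simp only [coassocR₁, coassocR₂, op_add, map_add, map_add_right, LinearMap.add_apply]
    abel
  · intro r' u
    simp only [coassocR₁, coassocR₂, op_smul, map_smul, map_smul_right,
      LinearMap.smul_apply, smul_sub]
  · rintro ⟨M, J⟩
    rw [hb, sub_eq_zero]
    exact stepz M J z

include hb hbd hm hLe hRe in
lemma qmem1 (x : TensorProduct ℂ (TensorProduct ℂ A D) D) :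
    x - s1 a dd (p1 lam b bd x) ∈ coassocRel₁ rhoL rhoR := by
  have hle : Submodule.span ℂ (Set.range (B1 b bd)) ≤
      (coassocRel₁ rhoL rhoR).comap (LinearMap.id - (s1 a dd).comp (p1 lam b bd)) := by
    rw [Submodule.span_le]
    rintro _ ⟨i, rfl⟩
    obtain ⟨⟨⟨m, j⟩, ⟨n1, n2, l⟩⟩, ⟨p, q, r⟩⟩ := i
    simp only [SetLike.mem_coe, Submodule.mem_comap, LinearMap.sub_apply,
      LinearMap.id_apply, LinearMap.comp_apply]
    rw [B1, Module.Basis.tensorProduct_apply, Module.Basis.tensorProduct_apply, hb, hbd, hbd]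
    have h := sp1_basis lam a b hb dd bd hbd rhoL rhoR hm hLe hRe m j n1 n2 l p q r
    have h2 := Submodule.neg_mem _ h
    rwa [neg_sub] at h2
  have hx : x ∈ Submodule.span ℂ (Set.range (B1 b bd)) := by
    rw [Module.Basis.span_eq]; exact Submodule.mem_top
  simpa using hle hx

include hb hbd hm hLe hRe in
lemma qmem2 (y : TensorProduct ℂ (TensorProduct ℂ D A) D) :
    y - s2 a dd (p2 lam b bd y) ∈ coassocRel₂ rhoL rhoR := by
  have hle : Submodule.span ℂ (Set.range (B2 b bd)) ≤
      (coassocRel₂ rhoL rhoR).comap (LinearMap.id - (s2 a dd).comp (p2 lam b bd)) := by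
    rw [Submodule.span_le]
    rintro _ ⟨i, rfl⟩
    obtain ⟨⟨⟨n1, n2, l⟩, ⟨m, j⟩⟩, ⟨p, q, r⟩⟩ := i
    simp only [SetLike.mem_coe, Submodule.mem_comap, LinearMap.sub_apply,
      LinearMap.id_apply, LinearMap.comp_apply]
    rw [B2, Module.Basis.tensorProduct_apply, Module.Basis.tensorProduct_apply, hbd, hb, hbd]
    have h := sp2_basis lam a b hb dd bd hbd rhoL rhoR hm hLe hRe n1 n2 l m j p q r
    have h2 := Submodule.neg_mem _ h
    rwa [neg_sub] at h2
  have hy : y ∈ Submodule.span ℂ (Set.range (B2 b bd)) := by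
    rw [Module.Basis.span_eq]; exact Submodule.mem_top
  simpa using hle hy

include hb hbd hm hLe hRe in
lemma rel1_ker : coassocRel₁ rhoL rhoR ≤ LinearMap.ker (p1 lam b bd) := by
  rw [coassocRel₁, Submodule.span_le]
  rintro _ ⟨x, δ, b₁, b₂, rfl⟩
  simp only [SetLike.mem_coe, LinearMap.mem_ker, map_sub]
  exact p1_kills lam a b hb dd bd hbd rhoL rhoR hm hLe hRe x δ b₁ b₂

include hb hbd hm hLe hRe in
lemma rel2_ker : coassocRel₂ rhoL rhoR ≤ LinearMap.ker (p2 lam b bd) := by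
  rw [coassocRel₂, Submodule.span_le]
  rintro _ ⟨x, δ, b₁, b₂, rfl⟩
  simp only [SetLike.mem_coe, LinearMap.mem_ker, map_sub]
  exact p2_kills lam a b hb dd bd hbd rhoL rhoR hm hLe hRe x δ b₁ b₂

include hb hbd hLe hRe in
lemma relstab_L2 (c1 c2 c3 : A) {y : TensorProduct ℂ (TensorProduct ℂ D A) D}
    (hy : y ∈ coassocRel₂ rhoL rhoR) :
    coassocL₂ rhoL c1 c2 c3 y ∈ coassocRel₂ rhoL rhoR := by
  have hle : coassocRel₂ rhoL rhoR ≤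
      (coassocRel₂ rhoL rhoR).comap (coassocL₂ rhoL c1 c2 c3) := by
    nth_rewrite 1 [coassocRel₂]
    rw [Submodule.span_le]
    rintro _ ⟨x, δ, b₁, b₂, rfl⟩
    simp only [SetLike.mem_coe, Submodule.mem_comap, map_sub]
    have key : (TensorProduct.map (rhoL (c1 ⊗ₜ[ℂ] c2)) (LinearMap.mulLeft ℂ c3)).comp
        (TensorProduct.map (rhoR (op b₁)) (LinearMap.mulRight ℂ b₂))
        = (TensorProduct.map (rhoR (op b₁)) (LinearMap.mulRight ℂ b₂)).comp
          (TensorProduct.map (rhoL (c1 ⊗ₜ[ℂ] c2)) (LinearMap.mulLeft ℂ c3)) := by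
      rw [← TensorProduct.map_comp, ← TensorProduct.map_comp]
      congr 1
      · apply LinearMap.ext; intro u
        simp only [LinearMap.comp_apply]
        exact sub_eq_zero.mp (comm_all lam a b hb dd bd hbd rhoL rhoR hLe hRe
          (c1 ⊗ₜ[ℂ] c2) b₁ u)
      · apply LinearMap.ext; intro u
        simp [mul_assoc]
    simp only [coassocL₂, TensorProduct.map_tmul, LinearMap.id_coe, id_eq]
    rw [← LinearMap.comp_apply, key, LinearMap.comp_apply]
    exact Submodule.subset_span
      ⟨TensorProduct.map (rhoL (c1 ⊗ₜ[ℂ] c2)) (LinearMap.mulLeft ℂ c3) x, δ, b₁, b₂, rfl⟩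
  exact hle hy

include hb hbd hLe hRe in
lemma relstab_R2 (c : A) {y : TensorProduct ℂ (TensorProduct ℂ D A) D}
    (hy : y ∈ coassocRel₂ rhoL rhoR) :
    coassocR₂ rhoR c y ∈ coassocRel₂ rhoL rhoR := by
  have hle : coassocRel₂ rhoL rhoR ≤
      (coassocRel₂ rhoL rhoR).comap (coassocR₂ rhoR c) := by
    nth_rewrite 1 [coassocRel₂]
    rw [Submodule.span_le]
    rintro _ ⟨x, δ, b₁, b₂, rfl⟩
    simp only [SetLike.mem_coe, Submodule.mem_comap, map_sub]
    simp only [coassocR₂, TensorProduct.map_tmul, LinearMap.id_coe, id_eq]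
    rw [← sub_eq_zero.mp (comm_all lam a b hb dd bd hbd rhoL rhoR hLe hRe
      (b₁ ⊗ₜ[ℂ] b₂) c δ)]
    exact Submodule.subset_span ⟨x, rhoR (op c) δ, b₁, b₂, rfl⟩
  exact hle hy

end withAll

end CoassocAux


/-- Coassociativity (axiom (H1)) for the coproduct bimodule `Δ` of the hopfish
structure on the irrational rotation algebra: the `(A⊗A⊗A, A)`-bimodules
`(A ⊗ Δ) ⊗_{A⊗A} Δ` and `(Δ ⊗ A) ⊗_{A⊗A} Δ` are isomorphic, via a linear
equivalence of the balanced quotients intertwining the left `A⊗A⊗A`-action and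
the right `A`-action. -/
theorem coproduct_coassociativity
    (lam : ℝ) (hlam : Irrational (lam / (2 * Real.pi)))
    (A : Type) [Ring A] [Algebra ℂ A]
    (a : ℤ → ℤ → A)
    (b : Module.Basis (ℤ × ℤ) ℂ A) (hb : ∀ n l : ℤ, b (n, l) = a n l)
    (hmul : ∀ n₁ l₁ n₂ l₂ : ℤ,
      a n₁ l₁ * a n₂ l₂ =
        Complex.exp (Complex.I * (lam * n₁ * l₂)) • a (n₁ + n₂) (l₁ + l₂))
    (D : Type) [AddCommGroup D] [Module ℂ D]
    (dd : ℤ → ℤ → ℤ → D)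
    (bd : Module.Basis (ℤ × ℤ × ℤ) ℂ D) (hbd : ∀ n₁ n₂ l : ℤ, bd (n₁, n₂, l) = dd n₁ n₂ l)
    (rhoL : TensorProduct ℂ A A →ₐ[ℂ] Module.End ℂ D)
    (rhoR : Aᵐᵒᵖ →ₐ[ℂ] Module.End ℂ D)
    (hL : ∀ m₁ j₁ m₂ j₂ n₁ n₂ l : ℤ,
      rhoL (a m₁ j₁ ⊗ₜ[ℂ] a m₂ j₂) (dd n₁ n₂ l) =
        Complex.exp (-(Complex.I *
            (lam * (((n₁ + m₁) * j₁ + (n₂ + m₂) * j₂ : ℤ) : ℝ)))) •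
          dd (n₁ + m₁) (n₂ + m₂) (l - j₁ - j₂))
    (hR : ∀ m j n₁ n₂ l : ℤ,
      rhoR (MulOpposite.op (a m j)) (dd n₁ n₂ l) =
        Complex.exp (Complex.I * (lam * (((m * (l - j)) : ℤ) : ℝ))) •
          dd (n₁ + m) (n₂ + m) (l - j)) :
    ∃ Φ : (TensorProduct ℂ (TensorProduct ℂ A D) D ⧸ coassocRel₁ rhoL rhoR) ≃ₗ[ℂ]
          (TensorProduct ℂ (TensorProduct ℂ D A) D ⧸ coassocRel₂ rhoL rhoR),
      (∀ c₁ c₂ c₃ : A, ∀ z w,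
        Φ (Submodule.Quotient.mk z) = Submodule.Quotient.mk w →
        Φ (Submodule.Quotient.mk (coassocL₁ rhoL c₁ c₂ c₃ z)) =
          Submodule.Quotient.mk (coassocL₂ rhoL c₁ c₂ c₃ w)) ∧
      (∀ c : A, ∀ z w,
        Φ (Submodule.Quotient.mk z) = Submodule.Quotient.mk w →
        Φ (Submodule.Quotient.mk (coassocR₁ rhoR c z)) =
          Submodule.Quotient.mk (coassocR₂ rhoR c w)) := by
  classical
  have hm := CoassocAux.hmul' lam a hmul
  have hLe := CoassocAux.hL' lam a dd rhoL hL
  have hRe : ∀ m j n₁ n₂ l : ℤ, rhoR (MulOpposite.op (a m j)) (dd n₁ n₂ l) =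
      CoassocAux.ee lam (m * (l - j)) • dd (n₁ + m) (n₂ + m) (l - j) := hR
  have hker1 : coassocRel₁ rhoL rhoR ≤
      LinearMap.ker ((coassocRel₂ rhoL rhoR).mkQ.comp ((CoassocAux.s2 a dd).comp (CoassocAux.p1 lam b bd))) := by
    intro z hz
    have hz0 : CoassocAux.p1 lam b bd z = 0 := CoassocAux.rel1_ker lam a b hb dd bd hbd rhoL rhoR hm hLe hRe hz
    simp [LinearMap.mem_ker, LinearMap.comp_apply, hz0]
  have hker2 : coassocRel₂ rhoL rhoR ≤
      LinearMap.ker ((coassocRel₁ rhoL rhoR).mkQ.comp ((CoassocAux.s1 a dd).comp (CoassocAux.p2 lam b bd))) := by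
    intro z hz
    have hz0 : CoassocAux.p2 lam b bd z = 0 := CoassocAux.rel2_ker lam a b hb dd bd hbd rhoL rhoR hm hLe hRe hz
    simp [LinearMap.mem_ker, LinearMap.comp_apply, hz0]
  have hFG : ((coassocRel₁ rhoL rhoR).liftQ ((coassocRel₂ rhoL rhoR).mkQ.comp ((CoassocAux.s2 a dd).comp (CoassocAux.p1 lam b bd))) hker1).comp
      ((coassocRel₂ rhoL rhoR).liftQ ((coassocRel₁ rhoL rhoR).mkQ.comp ((CoassocAux.s1 a dd).comp (CoassocAux.p2 lam b bd))) hker2)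
      = LinearMap.id := by
    apply LinearMap.ext
    intro qy
    obtain ⟨y, rfl⟩ := Submodule.Quotient.mk_surjective _ qy
    simp only [LinearMap.comp_apply, Submodule.liftQ_apply, Submodule.mkQ_apply,
      LinearMap.id_apply]
    rw [Submodule.Quotient.eq]
    have e1 : CoassocAux.p1 lam b bd (CoassocAux.s1 a dd (CoassocAux.p2 lam b bd y))
        = CoassocAux.p2 lam b bd y :=
      LinearMap.congr_fun (CoassocAux.p1s1 lam a b hb dd bd hbd) (CoassocAux.p2 lam b bd y)
    rw [e1]
    have h := CoassocAux.qmem2 lam a b hb dd bd hbd rhoL rhoR hm hLe hRe y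
    have h2 := Submodule.neg_mem _ h
    rwa [neg_sub] at h2
  have hGF : ((coassocRel₂ rhoL rhoR).liftQ ((coassocRel₁ rhoL rhoR).mkQ.comp ((CoassocAux.s1 a dd).comp (CoassocAux.p2 lam b bd))) hker2).comp
      ((coassocRel₁ rhoL rhoR).liftQ ((coassocRel₂ rhoL rhoR).mkQ.comp ((CoassocAux.s2 a dd).comp (CoassocAux.p1 lam b bd))) hker1)
      = LinearMap.id := by
    apply LinearMap.ext
    intro qx
    obtain ⟨x, rfl⟩ := Submodule.Quotient.mk_surjective _ qx
    simp only [LinearMap.comp_apply, Submodule.liftQ_apply, Submodule.mkQ_apply,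
      LinearMap.id_apply]
    rw [Submodule.Quotient.eq]
    have e1 : CoassocAux.p2 lam b bd (CoassocAux.s2 a dd (CoassocAux.p1 lam b bd x))
        = CoassocAux.p1 lam b bd x :=
      LinearMap.congr_fun (CoassocAux.p2s2 lam a b hb dd bd hbd) (CoassocAux.p1 lam b bd x)
    rw [e1]
    have h := CoassocAux.qmem1 lam a b hb dd bd hbd rhoL rhoR hm hLe hRe x
    have h2 := Submodule.neg_mem _ h
    rwa [neg_sub] at h2
  refine ⟨LinearEquiv.ofLinear _ _ hFG hGF, ?_, ?_⟩
  · intro c1 c2 c3 z w hzw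
    simp only [LinearEquiv.ofLinear_apply, Submodule.liftQ_apply, LinearMap.comp_apply,
      Submodule.mkQ_apply] at hzw ⊢
    have hsub : CoassocAux.s2 a dd (CoassocAux.p1 lam b bd z) - w ∈ coassocRel₂ rhoL rhoR :=
      (Submodule.Quotient.eq _).mp hzw
    have h1 : CoassocAux.p2 lam b bd
          (CoassocAux.s2 a dd (CoassocAux.p1 lam b bd (coassocL₁ rhoL c1 c2 c3 z)))
        = CoassocAux.p2 lam b bd
          (coassocL₂ rhoL c1 c2 c3 (CoassocAux.s2 a dd (CoassocAux.p1 lam b bd z))) := by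
      have e1 : CoassocAux.p2 lam b bd (CoassocAux.s2 a dd
            (CoassocAux.p1 lam b bd (coassocL₁ rhoL c1 c2 c3 z)))
          = CoassocAux.p1 lam b bd (coassocL₁ rhoL c1 c2 c3 z) :=
        LinearMap.congr_fun (CoassocAux.p2s2 lam a b hb dd bd hbd) _
      rw [e1]
      exact CoassocAux.intL_all lam a b hb dd bd hbd rhoL rhoR hm hLe hRe c1 c2 c3 z
    have h2 : CoassocAux.s2 a dd (CoassocAux.p1 lam b bd (coassocL₁ rhoL c1 c2 c3 z))
        - coassocL₂ rhoL c1 c2 c3 (CoassocAux.s2 a dd (CoassocAux.p1 lam b bd z))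
        ∈ coassocRel₂ rhoL rhoR := by
      have hq := CoassocAux.qmem2 lam a b hb dd bd hbd rhoL rhoR hm hLe hRe
        (CoassocAux.s2 a dd (CoassocAux.p1 lam b bd (coassocL₁ rhoL c1 c2 c3 z))
          - coassocL₂ rhoL c1 c2 c3 (CoassocAux.s2 a dd (CoassocAux.p1 lam b bd z)))
      rwa [map_sub, h1, sub_self, map_zero, sub_zero] at hq
    have h3 := CoassocAux.relstab_L2 lam a b hb dd bd hbd rhoL rhoR hLe hRe c1 c2 c3 hsub
    rw [Submodule.Quotient.eq]
    have hadd := Submodule.add_mem _ h2 h3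
    convert hadd using 1
    rw [map_sub]
    abel
  · intro c z w hzw
    simp only [LinearEquiv.ofLinear_apply, Submodule.liftQ_apply, LinearMap.comp_apply,
      Submodule.mkQ_apply] at hzw ⊢
    have hsub : CoassocAux.s2 a dd (CoassocAux.p1 lam b bd z) - w ∈ coassocRel₂ rhoL rhoR :=
      (Submodule.Quotient.eq _).mp hzw
    have h1 : CoassocAux.p2 lam b bd
          (CoassocAux.s2 a dd (CoassocAux.p1 lam b bd (coassocR₁ rhoR c z)))
        = CoassocAux.p2 lam b bd
          (coassocR₂ rhoR c (CoassocAux.s2 a dd (CoassocAux.p1 lam b bd z))) := by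
      have e1 : CoassocAux.p2 lam b bd (CoassocAux.s2 a dd
            (CoassocAux.p1 lam b bd (coassocR₁ rhoR c z)))
          = CoassocAux.p1 lam b bd (coassocR₁ rhoR c z) :=
        LinearMap.congr_fun (CoassocAux.p2s2 lam a b hb dd bd hbd) _
      rw [e1]
      exact CoassocAux.intR_all lam a b hb dd bd hbd rhoL rhoR hm hLe hRe c z
    have h2 : CoassocAux.s2 a dd (CoassocAux.p1 lam b bd (coassocR₁ rhoR c z))
        - coassocR₂ rhoR c (CoassocAux.s2 a dd (CoassocAux.p1 lam b bd z))
        ∈ coassocRel₂ rhoL rhoR := by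
      have hq := CoassocAux.qmem2 lam a b hb dd bd hbd rhoL rhoR hm hLe hRe
        (CoassocAux.s2 a dd (CoassocAux.p1 lam b bd (coassocR₁ rhoR c z))
          - coassocR₂ rhoR c (CoassocAux.s2 a dd (CoassocAux.p1 lam b bd z)))
      rwa [map_sub, h1, sub_self, map_zero, sub_zero] at hq
    have h3 := CoassocAux.relstab_R2 lam a b hb dd bd hbd rhoL rhoR hLe hRe c hsub
    rw [Submodule.Quotient.eq]
    have hadd := Submodule.add_mem _ h2 h3
    convert hadd using 1
    rw [map_sub]
    abel
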